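/- For any finite product C = B_{n_1} ⋯ B_{n_k} and d = i(u⁻¹ - u), one has (1, d) C (1, -d)ᵀ = (1 - d²) · (1, 0) B_{n_k}⋯B_{n_1} (1, 0)ᵀ. -/

import Mathlib

open Matrix

/-- The balanced q-integer `[n] = (u^n - u^{-n})/(u - u⁻¹)`, where `w` is the
inverse of `u - u⁻¹`. -/
def qint {R : Type*} [CommRing R] (u : Rˣ) (w : R) (n : ℤ) : R :=
  (((u ^ n : Rˣ) : R) - ((u ^ (-n) : Rˣ) : R)) * w

/-- The matrix `B_n = [[[n], i·u^{-n}], [i·u^n, 0]]`. -/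
def Bmat {R : Type*} [CommRing R] (i : R) (u : Rˣ) (w : R) (n : ℤ) :
    Matrix (Fin 2) (Fin 2) R :=
  !![qint u w n, i * ((u ^ (-n) : Rˣ) : R); i * ((u ^ n : Rˣ) : R), 0]

theorem stmt12 {R : Type*} [CommRing R] (i : R) (hi : i ^ 2 = -1)
    (u : Rˣ) (w : R) (hw : ((u : R) - ((u⁻¹ : Rˣ) : R)) * w = 1)
    (d : R) (hd : d = i * (((u⁻¹ : Rˣ) : R) - (u : R))) (l : List ℤ) :
    dotProduct ![1, d] (((l.map (Bmat i u w)).prod).mulVec ![1, -d])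
      = (1 - d ^ 2) *
        dotProduct ![1, 0]
          (((l.reverse.map (Bmat i u w)).prod).mulVec ![1, 0]) := by
  set T : Matrix (Fin 2) (Fin 2) R := !![1, -d; -d, 1] with hT
  have hda : ∀ n : ℤ, d * qint u w n
      = i * ((u ^ (-n) : Rˣ) : R) - i * ((u ^ n : Rˣ) : R) := by
    intro n
    rw [hd, qint]
    linear_combination (-(i) * (((u ^ n : Rˣ) : R) - ((u ^ (-n) : Rˣ) : R))) * hw
  have key : ∀ n : ℤ, Bmat i u w n * T = T * (Bmat i u w n)ᵀ := by
    intro n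
    have h := hda n
    simp only [_root_.zpow_neg] at h
    ext x y
    fin_cases x <;> fin_cases y <;>
      simp [Bmat, Matrix.mul_apply, Fin.sum_univ_two, hT, _root_.zpow_neg,
        Matrix.transpose_apply, Matrix.vecHead, Matrix.vecTail] <;>
      (try ring1) <;> (try linear_combination h) <;> linear_combination -h
  have main : ∀ L : List ℤ, ((L.map (Bmat i u w)).prod) * T
      = T * ((L.reverse.map (Bmat i u w)).prod)ᵀ := by
    intro L
    induction L with
    | nil => simp
    | cons a L ih =>
        simp only [List.map_cons, List.prod_cons, List.reverse_cons, List.map_append,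
          List.prod_append, List.map_cons, List.prod_cons, List.map_nil, List.prod_nil,
          mul_one, Matrix.transpose_mul]
        rw [mul_assoc, ih, ← mul_assoc, key, mul_assoc]
  have h := main l
  set P := (l.map (Bmat i u w)).prod with hP
  set Q := (l.reverse.map (Bmat i u w)).prod with hQ
  have e00 := congrFun (congrFun h 0) 0
  have e10 := congrFun (congrFun h 1) 0
  simp [Matrix.mul_apply, Fin.sum_univ_two, hT, Matrix.transpose_apply] at e00 e10
  simp [dotProduct, Matrix.mulVec, Fin.sum_univ_two]
  linear_combination e00 + d * e10
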